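/- With sentences as an inductive type and G, F defined by mutual structural recursion as in the monotonicity lemma, if U is consistent (no A with A ∈ U and neg A ∈ U), then no sentence belongs to both G(U) and F(U), i.e., G(U) ∩ F(U) = ∅. -/
import Mathlib

inductive Sent : Type
  | atom : Bool → Sent
  | tr : Sent → Sent
  | neg : Sent → Sent
  | disj : Sent → Sent → Sent

def GF (U : Set Sent) : Sent → Prop × Prop
  | Sent.atom b => (b = true, b = false)
  | Sent.tr A => (A ∈ U, Sent.neg A ∈ U)
  | Sent.neg A => ((GF U A).2, (GF U A).1)
  | Sent.disj A B => ((GF U A).1 ∨ (GF U B).1, (GF U A).2 ∧ (GF U B).2)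

def Gset (U : Set Sent) : Set Sent := {A | (GF U A).1}

def Fset (U : Set Sent) : Set Sent := {A | (GF U A).2}

def Consistent (U : Set Sent) : Prop := ¬ ∃ A, A ∈ U ∧ Sent.neg A ∈ U

lemma not_both (U : Set Sent) (hU : Consistent U) :
    ∀ A : Sent, ¬ ((GF U A).1 ∧ (GF U A).2) := by
  intro A
  induction A with
  | atom b => simp [GF]
  | tr A => exact fun ⟨h1, h2⟩ => hU ⟨A, h1, h2⟩
  | neg A ih => exact fun ⟨h1, h2⟩ => ih ⟨h2, h1⟩
  | disj A B ihA ihB =>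
    rintro ⟨h1 | h1, h2, h3⟩
    · exact ihA ⟨h1, h2⟩
    · exact ihB ⟨h1, h3⟩

theorem Gset_inter_Fset_empty (U : Set Sent) (hU : Consistent U) :
    Gset U ∩ Fset U = ∅ := by
  ext A
  simp only [Set.mem_inter_iff, Set.mem_empty_iff_false, iff_false]
  exact fun ⟨h1, h2⟩ => not_both U hU A ⟨h1, h2⟩
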